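/- For every vector c ∈ ℝ^m, (∫ M dμ) ·ᵥ c = 0 if and only if M(ω) ·ᵥ c = 0 for μ-almost every ω. Consequently, the matrix ℳ := ∫ M dμ is invertible if and only if the only vector c ∈ ℝ^m with M(ω) ·ᵥ c = 0 for μ-almost every ω is c = 0. -/

import Mathlib

open MeasureTheory Matrix

/-- For a random symmetric idempotent matrix `M`, `(∫ M dμ) ·ᵥ c = 0` iff `M(ω) ·ᵥ c = 0`
for almost every `ω`; consequently `∫ M dμ` is invertible iff the only vector annihilated
by almost every `M(ω)` is `0`. -/
theorem integral_projection_kernel_and_invertibility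
    {Ω : Type*} {mΩ : MeasurableSpace Ω} (μ : Measure Ω) [IsProbabilityMeasure μ]
    (m : ℕ) (hm : 0 < m)
    (M : Ω → Matrix (Fin m) (Fin m) ℝ)
    (hMmeas : ∀ i j, StronglyMeasurable fun ω => M ω i j)
    (hMsym : ∀ᵐ ω ∂μ, (M ω)ᵀ = M ω)
    (hMidem : ∀ᵐ ω ∂μ, M ω * M ω = M ω)
    (ℳ : Matrix (Fin m) (Fin m) ℝ)
    (hℳ : ∀ i j, ℳ i j = ∫ ω, M ω i j ∂μ) :
    (∀ c : Fin m → ℝ, ℳ *ᵥ c = 0 ↔ ∀ᵐ ω ∂μ, M ω *ᵥ c = 0)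
      ∧ (IsUnit ℳ ↔ ∀ c : Fin m → ℝ, (∀ᵐ ω ∂μ, M ω *ᵥ c = 0) → c = 0) := by
  -- a.e. bound on entries
  have hbound : ∀ᵐ ω ∂μ, ∀ i j, |M ω i j| ≤ 1 := by
    filter_upwards [hMsym, hMidem] with ω hsym hidem i j
    have hdiag : ∀ k, M ω k k = ∑ l, (M ω k l) ^ 2 := by
      intro k
      have h1 : ∑ l, M ω k l * M ω l k = M ω k k := by
        have := congrFun (congrFun hidem k) k
        rwa [Matrix.mul_apply] at this
      rw [← h1]
      refine Finset.sum_congr rfl fun l _ => ?_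
      have h2 : M ω l k = M ω k l := congrFun (congrFun hsym k) l
      rw [h2]; ring
    have hkk_le : ∀ k, M ω k k ≤ 1 := by
      intro k
      have h1 : (M ω k k) ^ 2 ≤ M ω k k :=
        calc (M ω k k) ^ 2 ≤ ∑ l, (M ω k l) ^ 2 :=
              Finset.single_le_sum (f := fun l => (M ω k l) ^ 2)
                (fun l _ => sq_nonneg _) (Finset.mem_univ k)
          _ = M ω k k := (hdiag k).symm
      nlinarith [sq_nonneg (M ω k k - 1)]
    have hsq : (M ω i j) ^ 2 ≤ M ω i i :=
      calc (M ω i j) ^ 2 ≤ ∑ l, (M ω i l) ^ 2 :=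
            Finset.single_le_sum (f := fun l => (M ω i l) ^ 2)
              (fun l _ => sq_nonneg _) (Finset.mem_univ j)
        _ = M ω i i := (hdiag i).symm
    have := hkk_le i
    nlinarith [abs_nonneg (M ω i j), sq_abs (M ω i j)]
  have hint : ∀ i j, Integrable (fun ω => M ω i j) μ := by
    intro i j
    refine ⟨(hMmeas i j).aestronglyMeasurable, HasFiniteIntegral.of_bounded (C := 1) ?_⟩
    filter_upwards [hbound] with ω h using (by simpa [Real.norm_eq_abs] using h i j)
  have hintv : ∀ (v : Fin m → ℝ) i, Integrable (fun ω => (M ω *ᵥ v) i) μ := by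
    intro v i
    have : Integrable (fun ω => ∑ j, M ω i j * v j) μ :=
      integrable_finset_sum _ fun j _ => (hint i j).mul_const _
    exact this
  have hswap : ∀ (v : Fin m → ℝ) i, (ℳ *ᵥ v) i = ∫ ω, (M ω *ᵥ v) i ∂μ := by
    intro v i
    simp only [Matrix.mulVec, dotProduct, hℳ]
    simp_rw [← integral_mul_const]
    rw [← integral_finset_sum _ fun j _ => (hint i j).mul_const _]
  have key : ∀ c : Fin m → ℝ, ℳ *ᵥ c = 0 ↔ ∀ᵐ ω ∂μ, M ω *ᵥ c = 0 := by
    intro c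
    constructor
    · intro h
      have h1 : c ⬝ᵥ (ℳ *ᵥ c) = ∫ ω, c ⬝ᵥ (M ω *ᵥ c) ∂μ := by
        simp only [dotProduct]
        simp_rw [hswap c, ← integral_const_mul]
        rw [← integral_finset_sum _ fun i _ => (hintv c i).const_mul _]
      have hq : c ⬝ᵥ (ℳ *ᵥ c) = ∫ ω, (M ω *ᵥ c) ⬝ᵥ (M ω *ᵥ c) ∂μ := by
        rw [h1]
        refine integral_congr_ae ?_
        filter_upwards [hMsym, hMidem] with ω hsym hidem
        calc c ⬝ᵥ (M ω *ᵥ c) = c ⬝ᵥ (M ω *ᵥ (M ω *ᵥ c)) := by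
              rw [Matrix.mulVec_mulVec, hidem]
          _ = c ⬝ᵥ ((M ω)ᵀ *ᵥ (M ω *ᵥ c)) := by rw [hsym]
          _ = (M ω *ᵥ c) ⬝ᵥ (M ω *ᵥ c) := by
              rw [Matrix.dotProduct_mulVec, Matrix.vecMul_transpose]
      rw [h, dotProduct_zero] at hq
      have hnn : 0 ≤ᵐ[μ] fun ω => (M ω *ᵥ c) ⬝ᵥ (M ω *ᵥ c) := by
        filter_upwards with ω
        exact Finset.sum_nonneg fun i _ => mul_self_nonneg _
      have hinteg : Integrable (fun ω => (M ω *ᵥ c) ⬝ᵥ (M ω *ᵥ c)) μ := by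
        have hmeas : StronglyMeasurable (fun ω => (M ω *ᵥ c) ⬝ᵥ (M ω *ᵥ c)) := by
          simp only [dotProduct, Matrix.mulVec]
          refine Finset.stronglyMeasurable_fun_sum _ fun i _ => ?_
          refine StronglyMeasurable.mul ?_ ?_ <;>
            exact Finset.stronglyMeasurable_fun_sum _ fun j _ => (hMmeas i j).mul_const _
        refine ⟨hmeas.aestronglyMeasurable,
          HasFiniteIntegral.of_bounded (C := m * (∑ j, |c j|) ^ 2) ?_⟩
        filter_upwards [hbound] with ω hb
        have hcomp : ∀ i, |(M ω *ᵥ c) i| ≤ ∑ j, |c j| := by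
          intro i
          have hr : (M ω *ᵥ c) i = ∑ j, M ω i j * c j := rfl
          rw [hr]
          calc |∑ j, M ω i j * c j| ≤ ∑ j, |M ω i j * c j| :=
                Finset.abs_sum_le_sum_abs _ _
            _ ≤ ∑ j, |c j| := by
                refine Finset.sum_le_sum fun j _ => ?_
                rw [abs_mul]
                exact mul_le_of_le_one_left (abs_nonneg _) (hb i j)
        have h2 : ‖(M ω *ᵥ c) ⬝ᵥ (M ω *ᵥ c)‖ ≤ ∑ _i : Fin m, (∑ j, |c j|) ^ 2 := by
          rw [Real.norm_eq_abs]
          calc |∑ i, (M ω *ᵥ c) i * (M ω *ᵥ c) i| ≤ ∑ i, |(M ω *ᵥ c) i * (M ω *ᵥ c) i| :=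
                Finset.abs_sum_le_sum_abs _ _
            _ ≤ ∑ _i : Fin m, (∑ j, |c j|) ^ 2 := by
                refine Finset.sum_le_sum fun i _ => ?_
                rw [abs_mul, sq]
                exact mul_le_mul (hcomp i) (hcomp i) (abs_nonneg _)
                  (Finset.sum_nonneg fun j _ => abs_nonneg _)
        simpa using h2
      have h0 := (integral_eq_zero_iff_of_nonneg_ae hnn hinteg).1 hq.symm
      filter_upwards [h0] with ω hω
      have hsum : ∑ i, (M ω *ᵥ c) i * (M ω *ᵥ c) i = 0 := hω
      funext i
      have := (Finset.sum_eq_zero_iff_of_nonneg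
        (fun i _ => mul_self_nonneg ((M ω *ᵥ c) i))).1 hsum i (Finset.mem_univ i)
      exact mul_self_eq_zero.1 this
    · intro h
      funext i
      rw [hswap c i, integral_congr_ae (g := fun _ => (0:ℝ))]
      · simp
      · filter_upwards [h] with ω hω
        exact congrFun hω i
  refine ⟨key, ?_⟩
  rw [← Matrix.mulVec_injective_iff_isUnit]
  constructor
  · intro hinj c hc
    have h0 : ℳ *ᵥ c = ℳ *ᵥ 0 := by simpa using (key c).2 hc
    exact hinj h0
  · intro h x y hxy
    have h0 : ℳ *ᵥ (x - y) = 0 := by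
      rw [Matrix.mulVec_sub, hxy, sub_self]
    exact sub_eq_zero.1 (h _ ((key _).1 h0))
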